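/- Let φ, ψ : (0,∞) → ℝ be measurable and let σ > 0 be such that t ↦ e^{−σt} |φ(t)| and t ↦ e^{−σt} |ψ(t)| are integrable on (0,∞). If (∫₀^∞ e^{−st} φ(t) dt) · (∫₀^∞ e^{−st} ψ(t) dt) = 1/s for every real s > σ, then ∫₀ᵗ φ(t−τ) ψ(τ) dτ = 1 for almost every t > 0, i.e. φ and ψ form a Sonine pair. -/

import Mathlib

open MeasureTheory Set
open scoped Convolution

lemma lap_exp {s : ℝ} (hs : 0 < s) :
    ∫ t in Ioi (0:ℝ), Real.exp (-s * t) = 1 / s := by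
  have hderiv : ∀ x ∈ Ioi (0:ℝ), HasDerivAt (fun t => -(1/s) * Real.exp (-s * t))
      (Real.exp (-s * x)) x := by
    intro x _
    have h1 : HasDerivAt (fun t : ℝ => -s * t) (-s) x := by
      simpa using (hasDerivAt_id x).const_mul (-s)
    have := (h1.exp).const_mul (-(1/s))
    convert this using 1
    · rfl
    · rfl
    · linear_combination (-(Real.exp (-s * x))) * (mul_one_div_cancel hs.ne')
  have hint : IntegrableOn (fun t => Real.exp (-s * t)) (Ioi (0:ℝ)) :=
    exp_neg_integrableOn_Ioi 0 hs
  have htend : Filter.Tendsto (fun t => -(1/s) * Real.exp (-s * t)) Filter.atTop (nhds 0) := by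
    have h2 : Filter.Tendsto (fun t : ℝ => -s * t) Filter.atTop Filter.atBot :=
      Filter.Tendsto.const_mul_atTop_of_neg (neg_neg_iff_pos.mpr hs) Filter.tendsto_id
    have := (Real.tendsto_exp_atBot.comp h2).const_mul (-(1/s))
    simpa using this
  have hcont : ContinuousWithinAt (fun t => -(1/s) * Real.exp (-s * t)) (Ici 0) 0 :=
    (Continuous.continuousWithinAt (by continuity))
  have := MeasureTheory.integral_Ioi_of_hasDerivAt_of_tendsto hcont hderiv hint htend
  rw [this]
  simp

lemma ae_zero_of_moments (k : ℝ → ℝ) (hk : IntegrableOn k (Ioo 0 1))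
    (hm : ∀ n : ℕ, ∫ x in Ioo (0:ℝ) 1, x ^ n * k x = 0) :
    ∀ᵐ x, x ∈ Ioo (0:ℝ) 1 → k x = 0 := by
  -- integrability of x^n * k
  have hint_pow : ∀ n : ℕ, IntegrableOn (fun x => x ^ n * k x) (Ioo (0:ℝ) 1) := by
    intro n
    refine Integrable.mono hk ?_ ?_
    · exact ((continuous_pow n).aestronglyMeasurable).mul hk.aestronglyMeasurable
    · filter_upwards [ae_restrict_mem measurableSet_Ioo] with x hx
      have hx1 : |x| ≤ 1 := by
        rw [abs_le]; constructor <;> [linarith [hx.1]; linarith [hx.2]]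
      have : |x ^ n| ≤ 1 := by
        rw [abs_pow]; exact pow_le_one₀ (abs_nonneg x) hx1
      calc ‖x ^ n * k x‖ = |x ^ n| * |k x| := abs_mul _ _
        _ ≤ 1 * |k x| := by gcongr
        _ = ‖k x‖ := by simp
  -- continuous test functions
  have hcont : ∀ g : ℝ → ℝ, Continuous g → ∫ x in Ioo (0:ℝ) 1, g x * k x = 0 := by
    intro g hg
    have hgk : IntegrableOn (fun x => g x * k x) (Ioo (0:ℝ) 1) := by
      obtain ⟨C, hC⟩ := (isCompact_Icc (a := (0:ℝ)) (b := 1)).exists_bound_of_continuousOn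
        hg.continuousOn
      refine Integrable.mono (hk.const_mul (max C 1)) ?_ ?_
      · exact hg.aestronglyMeasurable.mul hk.aestronglyMeasurable
      · filter_upwards [ae_restrict_mem measurableSet_Ioo] with x hx
        have hxI : x ∈ Icc (0:ℝ) 1 := ⟨hx.1.le, hx.2.le⟩
        have h1 : ‖g x‖ ≤ max C 1 := le_trans (hC x hxI) (le_max_left _ _)
        calc ‖g x * k x‖ = ‖g x‖ * ‖k x‖ := abs_mul _ _
          _ ≤ max C 1 * ‖k x‖ := by
              gcongr
          _ = ‖max C 1 * k x‖ := by
              rw [norm_mul, Real.norm_of_nonneg (le_trans zero_le_one (le_max_right C 1))]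
    -- polynomial test functions
    have hpoly : ∀ p : Polynomial ℝ,
        IntegrableOn (fun x => p.eval x * k x) (Ioo (0:ℝ) 1) ∧
          ∫ x in Ioo (0:ℝ) 1, p.eval x * k x = 0 := by
      intro p
      have heq : (fun x => p.eval x * k x) =
          fun x => ∑ i ∈ Finset.range (p.natDegree + 1), p.coeff i * (x ^ i * k x) := by
        funext x
        rw [Polynomial.eval_eq_sum_range, Finset.sum_mul]
        congr 1; funext i; ring
      constructor
      · rw [heq]
        exact integrable_finset_sum _ fun i _ => (hint_pow i).const_mul _
      · rw [heq, integral_finset_sum _ fun i _ => (hint_pow i).const_mul _]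
        refine Finset.sum_eq_zero fun i _ => ?_
        rw [integral_const_mul, hm i, mul_zero]
    -- approximation
    set C := ∫ x in Ioo (0:ℝ) 1, |k x|
    have hC0 : 0 ≤ C := integral_nonneg fun x => abs_nonneg _
    have hkabs : IntegrableOn (fun x => |k x|) (Ioo (0:ℝ) 1) := hk.abs
    have key : ∀ ε : ℝ, 0 < ε → |∫ x in Ioo (0:ℝ) 1, g x * k x| ≤ ε * (C + 1) := by
      intro ε hε
      -- get a polynomial ε-close to g on Icc 0 1
      set f : C(Icc (0:ℝ) 1, ℝ) := ⟨fun x => g x.1, hg.comp continuous_subtype_val⟩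
      have hmem : f ∈ closure ((polynomialFunctions (Icc (0:ℝ) 1) : Set C(Icc (0:ℝ) 1, ℝ))) :=
        continuousMap_mem_polynomialFunctions_closure (0:ℝ) 1 f
      rw [Metric.mem_closure_iff] at hmem
      obtain ⟨pf, hpf_mem, hpf_dist⟩ := hmem ε hε
      rw [polynomialFunctions_coe] at hpf_mem
      obtain ⟨p, rfl⟩ := hpf_mem
      -- pointwise bound on Ioo
      have hbnd : ∀ x ∈ Ioo (0:ℝ) 1, |g x - p.eval x| ≤ ε := by
        intro x hx
        have hxI : x ∈ Icc (0:ℝ) 1 := ⟨hx.1.le, hx.2.le⟩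
        have := ContinuousMap.dist_apply_le_dist (f := f)
          (g := Polynomial.toContinuousMapOnAlgHom (Icc (0:ℝ) 1) p) ⟨x, hxI⟩
        have h2 : dist (g x) (p.eval x) ≤
            dist f (Polynomial.toContinuousMapOnAlgHom (Icc (0:ℝ) 1) p) := by
          simpa [f, Polynomial.toContinuousMapOnAlgHom] using this
        rw [Real.dist_eq] at h2
        exact h2.trans hpf_dist.le
      have hsub : ∫ x in Ioo (0:ℝ) 1, g x * k x =
          ∫ x in Ioo (0:ℝ) 1, (g x - p.eval x) * k x := by
        rw [show (fun x => (g x - p.eval x) * k x)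
            = fun x => g x * k x - p.eval x * k x from funext fun x => by ring,
          integral_sub hgk (hpoly p).1, (hpoly p).2, sub_zero]
      rw [hsub]
      calc |∫ x in Ioo (0:ℝ) 1, (g x - p.eval x) * k x|
          ≤ ∫ x in Ioo (0:ℝ) 1, |(g x - p.eval x) * k x| := by
            simpa only [Real.norm_eq_abs] using norm_integral_le_integral_norm
              (fun x => (g x - Polynomial.eval x p) * k x)
        _ ≤ ∫ x in Ioo (0:ℝ) 1, ε * |k x| := by
            refine setIntegral_mono_on ?_ (hkabs.const_mul ε) measurableSet_Ioo ?_
            · exact (hgk.sub (hpoly p).1).abs.congr (by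
                filter_upwards with x
                simp [Pi.sub_apply, ← sub_mul])
            · intro x hx
              rw [abs_mul]
              exact mul_le_mul_of_nonneg_right (hbnd x hx) (abs_nonneg _)
        _ = ε * C := by rw [integral_const_mul]
        _ ≤ ε * (C + 1) := by nlinarith
    -- conclude integral is zero
    have habs : |∫ x in Ioo (0:ℝ) 1, g x * k x| ≤ 0 := by
      refine le_of_forall_pos_le_add fun ε hε => ?_
      have hε' : 0 < ε / (C + 1) := div_pos hε (by linarith)
      have := key _ hε'
      rw [div_mul_cancel₀] at this
      · linarith
      · linarith
    have := abs_nonneg (∫ x in Ioo (0:ℝ) 1, g x * k x)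
    linarith [abs_eq_zero.mp (le_antisymm habs this)]
  -- apply distribution-theoretic vanishing
  refine IsOpen.ae_eq_zero_of_integral_contDiff_smul_eq_zero isOpen_Ioo
    hk.locallyIntegrableOn ?_
  intro g hg hgsupp hgsub
  have heq : (fun x => g x • k x) = (Ioo (0:ℝ) 1).indicator (fun x => g x • k x) := by
    funext x
    by_cases hx : x ∈ Ioo (0:ℝ) 1
    · rw [indicator_of_mem hx]
    · rw [indicator_of_notMem hx]
      have : g x = 0 := image_eq_zero_of_notMem_tsupport (fun hmem => hx (hgsub hmem))
      rw [this, zero_smul]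
  rw [heq, integral_indicator measurableSet_Ioo]
  simpa [smul_eq_mul] using hcont g hg.continuous

theorem sonine_pair_from_laplace
    (φ ψ : ℝ → ℝ) (σ : ℝ) (hσ : 0 < σ)
    (hφm : Measurable φ) (hψm : Measurable ψ)
    (hφ : IntegrableOn (fun t => Real.exp (-σ * t) * |φ t|) (Ioi 0))
    (hψ : IntegrableOn (fun t => Real.exp (-σ * t) * |ψ t|) (Ioi 0))
    (h : ∀ s : ℝ, σ < s →
      (∫ t in Ioi (0:ℝ), Real.exp (-s * t) * φ t)
        * (∫ t in Ioi (0:ℝ), Real.exp (-s * t) * ψ t) = 1 / s) :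
    ∀ᵐ t ∂(volume.restrict (Ioi (0:ℝ))),
      (∫ τ in (0:ℝ)..t, φ (t - τ) * ψ τ) = 1 := by
  classical
  set c : ℝ → ℝ := fun t => ∫ τ in (0:ℝ)..t, φ (t - τ) * ψ τ with hc
  -- Step A : Laplace transform of the convolution
  have stepA : ∀ s : ℝ, σ < s →
      IntegrableOn (fun t => Real.exp (-s * t) * c t) (Ioi 0) ∧
        ∫ t in Ioi (0:ℝ), Real.exp (-s * t) * c t = 1 / s := by
    intro s hs
    have hind : ∀ (f : ℝ → ℝ), Measurable f →
        IntegrableOn (fun t => Real.exp (-σ * t) * |f t|) (Ioi 0) →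
        Integrable ((Ioi (0:ℝ)).indicator (fun t => Real.exp (-s * t) * f t)) := by
      intro f hfm hfi
      have hg : Integrable ((Ioi (0:ℝ)).indicator (fun t => Real.exp (-σ * t) * |f t|)) :=
        (integrable_indicator_iff measurableSet_Ioi).mpr hfi
      refine Integrable.mono hg ?_ ?_
      · exact (((Real.continuous_exp.comp (continuous_const.mul continuous_id)).measurable.mul
          hfm).indicator measurableSet_Ioi).aestronglyMeasurable
      · filter_upwards with t
        by_cases ht : t ∈ Ioi (0:ℝ)
        · rw [indicator_of_mem ht, indicator_of_mem ht]
          have h1 : Real.exp (-s * t) ≤ Real.exp (-σ * t) :=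
            Real.exp_le_exp.mpr (mul_le_mul_of_nonneg_right (neg_le_neg hs.le) (le_of_lt ht))
          rw [Real.norm_eq_abs, Real.norm_eq_abs, abs_mul, abs_mul,
            abs_of_nonneg (Real.exp_pos _).le, abs_of_nonneg (Real.exp_pos _).le, abs_abs]
          exact mul_le_mul_of_nonneg_right h1 (abs_nonneg _)
        · simp [indicator_of_notMem ht]
    have hΦ : Integrable ((Ioi (0:ℝ)).indicator (fun t => Real.exp (-s * t) * φ t)) :=
      hind φ hφm hφ
    have hΨ : Integrable ((Ioi (0:ℝ)).indicator (fun t => Real.exp (-s * t) * ψ t)) :=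
      hind ψ hψm hψ
    set Φ := (Ioi (0:ℝ)).indicator (fun t => Real.exp (-s * t) * φ t) with hΦdef
    set Ψ := (Ioi (0:ℝ)).indicator (fun t => Real.exp (-s * t) * ψ t) with hΨdef
    set Fc := Φ ⋆[ContinuousLinearMap.mul ℝ ℝ] Ψ with hFc
    have hFcInt : Integrable Fc := hΦ.integrable_convolution _ hΨ
    have key : ∀ t : ℝ, 0 < t → Fc t = Real.exp (-s * t) * c t := by
      intro t ht
      have h1 : Fc t = ∫ τ, Φ τ * Ψ (t - τ) := by
        simp [hFc, convolution, ContinuousLinearMap.mul_apply']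
      have h2 : ∀ τ : ℝ, Φ τ * Ψ (t - τ) =
          (Ioo (0:ℝ) t).indicator (fun τ => Real.exp (-s * t) * (φ τ * ψ (t - τ))) τ := by
        intro τ
        by_cases hτ : τ ∈ Ioo (0:ℝ) t
        · rw [indicator_of_mem hτ, hΦdef, hΨdef,
            indicator_of_mem (mem_Ioi.mpr hτ.1),
            indicator_of_mem (mem_Ioi.mpr (sub_pos.mpr hτ.2))]
          rw [show Real.exp (-s * t) = Real.exp (-s * τ) * Real.exp (-s * (t - τ)) by
            rw [← Real.exp_add]; ring_nf]
          ring
        · rw [indicator_of_notMem hτ]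
          rcases not_and_or.mp hτ with h' | h'
          · have : τ ∉ Ioi (0:ℝ) := by simpa using h'
            rw [hΦdef, indicator_of_notMem this, zero_mul]
          · have : t - τ ∉ Ioi (0:ℝ) := by
              simp only [mem_Ioi, not_lt, sub_nonpos]
              exact le_of_not_gt h'
            rw [hΨdef, indicator_of_notMem this, mul_zero]
      rw [h1]
      simp_rw [h2]
      rw [integral_indicator measurableSet_Ioo, integral_const_mul]
      congr 1
      have h3 : (∫ τ in (0:ℝ)..t, φ (t - τ) * ψ τ) = ∫ τ in (0:ℝ)..t, φ τ * ψ (t - τ) := by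
        have := intervalIntegral.integral_comp_sub_left (a := (0:ℝ)) (b := t)
          (fun τ => φ τ * ψ (t - τ)) t
        simp only [sub_sub_cancel, sub_zero, sub_self] at this
        exact this
      rw [hc]
      simp only
      rw [h3, intervalIntegral.integral_of_le ht.le, ← integral_Ioc_eq_integral_Ioo]
    have key0 : ∀ t : ℝ, t ≤ 0 → Fc t = 0 := by
      intro t ht
      have h1 : Fc t = ∫ τ, Φ τ * Ψ (t - τ) := by
        simp [hFc, convolution, ContinuousLinearMap.mul_apply']
      rw [h1]
      have : ∀ τ : ℝ, Φ τ * Ψ (t - τ) = 0 := by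
        intro τ
        by_cases hτ : τ ∈ Ioi (0:ℝ)
        · have : t - τ ∉ Ioi (0:ℝ) := by
            simp only [mem_Ioi, not_lt, sub_nonpos]
            exact ht.trans (le_of_lt hτ)
          rw [hΨdef, indicator_of_notMem this, mul_zero]
        · rw [hΦdef, indicator_of_notMem hτ, zero_mul]
      simp [this]
    have hlap : ∫ t in Ioi (0:ℝ), Real.exp (-s * t) * c t = 1 / s := by
      have h0 : ∫ t, Fc t = (∫ t, Φ t) * (∫ t, Ψ t) := by
        have := integral_convolution (ContinuousLinearMap.mul ℝ ℝ) hΦ hΨ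
        simpa [ContinuousLinearMap.mul_apply'] using this
      have h1 : ∫ t, Φ t = ∫ t in Ioi (0:ℝ), Real.exp (-s * t) * φ t := by
        rw [hΦdef, integral_indicator measurableSet_Ioi]
      have h2 : ∫ t, Ψ t = ∫ t in Ioi (0:ℝ), Real.exp (-s * t) * ψ t := by
        rw [hΨdef, integral_indicator measurableSet_Ioi]
      have h3 : ∫ t, Fc t = ∫ t in Ioi (0:ℝ), Real.exp (-s * t) * c t := by
        rw [show Fc = (Ioi (0:ℝ)).indicator Fc from funext fun t => by
          by_cases ht : t ∈ Ioi (0:ℝ)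
          · rw [indicator_of_mem ht]
          · rw [indicator_of_notMem ht, key0 t (le_of_not_gt ht)]]
        rw [integral_indicator measurableSet_Ioi]
        exact setIntegral_congr_fun measurableSet_Ioi fun t ht => key t ht
      rw [← h3, h0, h1, h2, h s hs]
    have hcInt : IntegrableOn (fun t => Real.exp (-s * t) * c t) (Ioi 0) :=
      (hFcInt.integrableOn (s := Ioi 0)).congr_fun (fun t ht => key t ht) measurableSet_Ioi
    exact ⟨hcInt, hlap⟩
  -- Step B : reduce to a moment problem on (0,1)
  set s₀ : ℝ := σ + 1 with hs₀def
  have hs₀ : σ < s₀ := by rw [hs₀def]; linarith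
  have hexpint : ∀ s : ℝ, 0 < s → IntegrableOn (fun t => Real.exp (-s * t)) (Ioi (0:ℝ)) :=
    fun s hs => exp_neg_integrableOn_Ioi 0 hs
  set h₀ : ℝ → ℝ := fun t => c t - 1 with hh₀
  have stepA' : ∀ s : ℝ, σ < s →
      IntegrableOn (fun t => Real.exp (-s * t) * h₀ t) (Ioi 0) ∧
        ∫ t in Ioi (0:ℝ), Real.exp (-s * t) * h₀ t = 0 := by
    intro s hs
    have hspos : 0 < s := hσ.trans hs
    have heq : (fun t => Real.exp (-s * t) * c t - Real.exp (-s * t))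
        = fun t => Real.exp (-s * t) * h₀ t := by
      funext t; rw [hh₀]; ring
    have hint := (stepA s hs).1.sub (hexpint s hspos)
    refine ⟨hint.congr (Filter.Eventually.of_forall fun t => by
      simpa [Pi.sub_apply] using congrFun heq t), ?_⟩
    rw [← heq, integral_sub (stepA s hs).1 (hexpint s hspos), (stepA s hs).2,
      lap_exp hspos, sub_self]
  -- change of variables x = exp(-t), t = -log x
  set L : ℝ → ℝ := fun x => -Real.log x with hL
  have hLderiv : ∀ x ∈ Ioo (0:ℝ) 1, HasDerivWithinAt L (-x⁻¹) (Ioo (0:ℝ) 1) x :=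
    fun x hx => ((Real.hasDerivAt_log (ne_of_gt hx.1)).neg).hasDerivWithinAt
  have hLinj : InjOn L (Ioo (0:ℝ) 1) := fun x hx y hy hxy =>
    Real.log_injOn_pos (mem_Ioi.mpr hx.1) (mem_Ioi.mpr hy.1) (neg_injective hxy)
  have hLim : L '' (Ioo (0:ℝ) 1) = Ioi (0:ℝ) := by
    ext t
    constructor
    · rintro ⟨x, hx, rfl⟩
      exact mem_Ioi.mpr (neg_pos.mpr (Real.log_neg hx.1 hx.2))
    · intro ht
      refine ⟨Real.exp (-t), ⟨Real.exp_pos _,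
        Real.exp_lt_one_iff.mpr (neg_lt_zero.mpr (mem_Ioi.mp ht))⟩, ?_⟩
      rw [hL]; simp [Real.log_exp]
  set k : ℝ → ℝ := fun x => x ^ (s₀ - 1) * h₀ (-Real.log x) with hk
  -- pointwise identity
  have hpt : ∀ (n : ℕ), ∀ x ∈ Ioo (0:ℝ) 1,
      |(-x⁻¹)| • (Real.exp (-(s₀ + n) * L x) * h₀ (L x)) = x ^ n * k x := by
    intro n x hx
    have hx0 : (0:ℝ) < x := hx.1
    rw [smul_eq_mul, hL]
    simp only
    have he : Real.exp (-(s₀ + n) * (-Real.log x)) = x ^ (s₀ + n : ℝ) := by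
      rw [Real.rpow_def_of_pos hx0]
      congr 1; ring
    rw [he, abs_neg, abs_of_pos (inv_pos.mpr hx0), hk]
    have hx1 : x⁻¹ * x ^ (s₀ + n : ℝ) = (x:ℝ) ^ (n:ℝ) * x ^ (s₀ - 1 : ℝ) := by
      rw [← Real.rpow_neg_one x, ← Real.rpow_add hx0, ← Real.rpow_add hx0]
      congr 1; ring
    rw [show x⁻¹ * (x ^ (s₀ + n : ℝ) * h₀ (-Real.log x))
        = (x⁻¹ * x ^ (s₀ + n : ℝ)) * h₀ (-Real.log x) from by ring, hx1,
      Real.rpow_natCast]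
    ring
  -- moments vanish
  have hmom : ∀ n : ℕ, ∫ x in Ioo (0:ℝ) 1, x ^ n * k x = 0 := by
    intro n
    have hsn : σ < s₀ + n := by
      have : (0:ℝ) ≤ n := Nat.cast_nonneg n
      rw [hs₀def]; push_cast; linarith
    have him := integral_image_eq_integral_abs_deriv_smul measurableSet_Ioo hLderiv hLinj
      (fun t => Real.exp (-(s₀ + n) * t) * h₀ t)
    rw [hLim] at him
    calc ∫ x in Ioo (0:ℝ) 1, x ^ n * k x
        = ∫ x in Ioo (0:ℝ) 1, |(-x⁻¹)| • (Real.exp (-(s₀ + n) * L x) * h₀ (L x)) :=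
          (setIntegral_congr_fun measurableSet_Ioo fun x hx => (hpt n x hx).symm)
      _ = ∫ t in Ioi (0:ℝ), Real.exp (-(s₀ + n) * t) * h₀ t := him.symm
      _ = 0 := (stepA' _ hsn).2
  -- k is integrable on (0,1)
  have hkint : IntegrableOn k (Ioo (0:ℝ) 1) := by
    have him := (integrableOn_image_iff_integrableOn_abs_deriv_smul measurableSet_Ioo hLderiv
      hLinj (fun t => Real.exp (-s₀ * t) * h₀ t))
    rw [hLim] at him
    have h5 := him.mp (stepA' s₀ hs₀).1
    refine h5.congr_fun (fun x hx => ?_) measurableSet_Ioo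
    have := hpt 0 x hx
    simpa using this
  -- apply the moment lemma
  have hae := ae_zero_of_moments k hkint hmom
  rw [ae_restrict_iff' measurableSet_Ioi, ae_iff]
  rw [ae_iff] at hae
  set N := {x : ℝ | ¬(x ∈ Ioo (0:ℝ) 1 → k x = 0)} with hNdef
  have hNsub : N ⊆ Ioo (0:ℝ) 1 := fun x hx => by
    by_contra h'
    exact hx fun hmem => absurd hmem h'
  have hdiff : DifferentiableOn ℝ L N := fun x hx =>
    ((Real.differentiableAt_log (ne_of_gt (hNsub hx).1)).neg).differentiableWithinAt
  have himg : volume (L '' N) = 0 :=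
    MeasureTheory.addHaar_image_eq_zero_of_differentiableOn_of_addHaar_eq_zero volume hdiff hae
  refine measure_mono_null ?_ himg
  intro t ht
  simp only [mem_setOf_eq, _root_.not_imp] at ht
  obtain ⟨ht0, htc⟩ := ht
  have ht0' : (0:ℝ) < t := mem_Ioi.mp ht0
  have hxmem : Real.exp (-t) ∈ Ioo (0:ℝ) 1 :=
    ⟨Real.exp_pos _, Real.exp_lt_one_iff.mpr (neg_lt_zero.mpr ht0')⟩
  refine ⟨Real.exp (-t), ?_, ?_⟩
  · rw [hNdef]
    simp only [mem_setOf_eq, _root_.not_imp]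
    refine ⟨hxmem, ?_⟩
    rw [hk]
    simp only [Real.log_exp, neg_neg]
    intro hzero
    have hpow : (0:ℝ) < Real.exp (-t) ^ (s₀ - 1 : ℝ) :=
      Real.rpow_pos_of_pos (Real.exp_pos _) _
    have : h₀ t = 0 := by
      rcases mul_eq_zero.mp hzero with h' | h'
      · exact absurd h' (ne_of_gt hpow)
      · exact h'
    rw [hh₀] at this
    exact htc (by linarith [sub_eq_zero.mp this])
  · rw [hL]; simp [Real.log_exp]
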